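/- arXiv:2404.14008 — 3 statements merged into one kernel-verified Lean document; each statement's English description precedes it below -/
import Mathlib

section
/- For all integers n ≥ 2 and m with 0 ≤ m ≤ n-1, the quantity K_{n,m} := -C(n,2)·C(n,m)·C(n-2,m) - C(n,2)·Σ_{k=1}^{m} (-1)^k (C(n,m+k)·C(n-2,m-k) + C(n,m-k)·C(n-2,m+k)) + ((2n-2m-1)/2)·Σ_{k=0}^{m} (-1)^k (1+2k)·C(n,m+1+k)·C(n,m-k) equals (n²/2)·C(n-1,m). -/
open Polynomial Finset

-- coeff of (1-X)^a
lemma coeff_one_sub_X_pow (a k : ℕ) :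
    ((1 - X : ℚ[X]) ^ a).coeff k = (-1)^k * a.choose k := by
  induction a generalizing k with
  | zero =>
    cases k with
    | zero => simp
    | succ k => simp [Polynomial.coeff_one, Nat.choose_eq_zero_of_lt]
  | succ a ih =>
    have : (1 - X : ℚ[X])^(a+1) = (1-X)^a - (1-X)^a * X := by ring
    rw [this]
    cases k with
    | zero => simp [ih]
    | succ k =>
      rw [coeff_sub, coeff_mul_X, ih, ih, Nat.choose_succ_succ']
      push_cast
      ring

lemma coeff_one_sub_X_sq_pow (q : ℕ) (r : ℕ) :
    ((1 - X^2 : ℚ[X]) ^ q).coeff r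
      = if 2 ∣ r then (-1 : ℚ)^(r/2) * q.choose (r/2) else 0 := by
  induction q generalizing r with
  | zero =>
    rcases r with _ | r
    · simp
    · rw [pow_zero, Polynomial.coeff_one, if_neg (by omega : ¬ ((r + 1 : ℕ) = 0))]
      by_cases h : 2 ∣ r + 1
      · rw [if_pos h, Nat.choose_eq_zero_of_lt (by omega : 0 < (r+1)/2)]
        simp
      · rw [if_neg h]
  | succ q ih =>
    have e : (1 - X^2 : ℚ[X])^(q+1) = (1-X^2)^q - (1-X^2)^q * X * X := by ring
    rw [e]
    rcases r with _ | r
    · rw [coeff_sub, Polynomial.mul_coeff_zero, Polynomial.coeff_X_zero, mul_zero, sub_zero,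
        ih]
      norm_num
    · rcases r with _ | r
      · rw [coeff_sub, Polynomial.coeff_mul_X, Polynomial.mul_coeff_zero,
          Polynomial.coeff_X_zero, mul_zero, ih]
        have h1 : ¬ (2 ∣ 1) := by decide
        simp only [if_neg h1, sub_zero]
      · rw [coeff_sub, Polynomial.coeff_mul_X, Polynomial.coeff_mul_X, ih, ih]
        by_cases h : 2 ∣ r
        · have h2 : 2 ∣ r + 1 + 1 := by omega
          have hd : (r+1+1)/2 = r/2 + 1 := by omega
          simp only [if_pos h, if_pos h2, hd, Nat.choose_succ_succ]
          push_cast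
          ring
        · have h2 : ¬ 2 ∣ r + 1 + 1 := by omega
          simp only [if_neg h, if_neg h2]
          ring


-- H1
lemma H1 (q M : ℕ) :
    (((1 - X^2 : ℚ[X]) ^ q) * (1 - X)).coeff (2*M) = (-1:ℚ)^M * q.choose M := by
  have e : ((1 - X^2 : ℚ[X]) ^ q) * (1 - X) = (1-X^2)^q - (1-X^2)^q * X := by ring
  rw [e, coeff_sub]
  rcases M with _ | M
  · rw [mul_zero, Polynomial.mul_coeff_zero, Polynomial.coeff_X_zero, mul_zero, sub_zero,
      coeff_one_sub_X_sq_pow]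
    norm_num
  · have h1 : 2 * (M+1) = 2*M+1 + 1 := by ring
    rw [h1, Polynomial.coeff_mul_X, coeff_one_sub_X_sq_pow, coeff_one_sub_X_sq_pow]
    have : ¬ 2 ∣ 2*M+1 := by omega
    rw [if_neg this, if_pos (by omega : 2 ∣ 2*M+1+1), sub_zero]
    have : (2*M+1+1)/2 = M+1 := by omega
    rw [this]

-- H2
lemma H2 (q M : ℕ) :
    (((1 - X^2 : ℚ[X]) ^ q) * (1 - X)^2).coeff (2*(M+1))
      = (-1:ℚ)^(M+1) * (q.choose (M+1) - q.choose M) := by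
  have e : ((1 - X^2 : ℚ[X]) ^ q) * (1 - X)^2
      = (1-X^2)^q - (1-X^2)^q * X - (1-X^2)^q * X + (1-X^2)^q * X * X := by ring
  rw [e]
  have h1 : 2 * (M+1) = 2*M + 1 + 1 := by ring
  rw [h1, coeff_add, coeff_sub, coeff_sub, Polynomial.coeff_mul_X, Polynomial.coeff_mul_X,
    Polynomial.coeff_mul_X, coeff_one_sub_X_sq_pow, coeff_one_sub_X_sq_pow,
    coeff_one_sub_X_sq_pow]
  have hodd : ¬ 2 ∣ 2*M+1 := by omega
  rw [if_neg hodd, if_pos (by omega : 2 ∣ 2*M+1+1), if_pos (by omega : 2 ∣ 2*M)]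
  have e1 : (2*M+1+1)/2 = M+1 := by omega
  have e2 : (2*M)/2 = M := by omega
  rw [e1, e2]
  ring

lemma H2zero (q : ℕ) :
    (((1 - X^2 : ℚ[X]) ^ q) * (1 - X)^2).coeff 0 = 1 := by
  rw [Polynomial.mul_coeff_zero, coeff_one_sub_X_sq_pow, coeff_one_sub_X_pow]
  norm_num

-- G : sum to coeff
lemma Gsum (a b r : ℕ) :
    ∑ j ∈ range (r+1), (-1:ℚ)^j * a.choose j * b.choose (r - j)
      = (((1 - X : ℚ[X])^a) * ((1 + X)^b)).coeff r := by
  rw [Polynomial.coeff_mul, Finset.Nat.sum_antidiagonal_eq_sum_range_succ_mk]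
  exact Finset.sum_congr rfl fun j hj => by
    rw [coeff_one_sub_X_pow, Polynomial.coeff_one_add_X_pow]

-- factorizations
lemma fact1 (P : ℕ) : ((1 - X : ℚ[X])^(P+2)) * ((1 + X)^(P+1))
    = ((1 - X^2)^(P+1)) * (1 - X) := by
  have : ((1:ℚ[X]) - X^2) = (1-X) * (1+X) := by ring
  rw [this, mul_pow]
  ring

lemma fact2 (P : ℕ) : ((1 - X : ℚ[X])^(P+2)) * ((1 + X)^P)
    = ((1 - X^2)^P) * (1 - X)^2 := by
  have : ((1:ℚ[X]) - X^2) = (1-X) * (1+X) := by ring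
  rw [this, mul_pow]
  ring

lemma sum_Icc_one (g : ℤ → ℚ) (M : ℕ) :
    ∑ k ∈ Finset.Icc (1:ℤ) (M : ℤ), g k = ∑ i ∈ range M, g (i+1) := by
  induction M with
  | zero => simp
  | succ M ih =>
    have h1 : Finset.Icc (1:ℤ) ((M+1 : ℕ) : ℤ) = insert ((M:ℤ)+1) (Finset.Icc 1 (M:ℤ)) := by
      ext x; simp only [Finset.mem_Icc, Finset.mem_insert]; push_cast; omega
    rw [h1, Finset.sum_insert (by simp only [Finset.mem_Icc]; omega), ih,
      Finset.sum_range_succ]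
    ring

lemma sum_Icc_zero (g : ℤ → ℚ) (M : ℕ) :
    ∑ k ∈ Finset.Icc (0:ℤ) (M : ℤ), g k = ∑ i ∈ range (M+1), g i := by
  induction M with
  | zero => simp
  | succ M ih =>
    have h1 : Finset.Icc (0:ℤ) ((M+1 : ℕ) : ℤ) = insert ((M:ℤ)+1) (Finset.Icc 0 (M:ℤ)) := by
      ext x; simp only [Finset.mem_Icc, Finset.mem_insert]; push_cast; omega
    rw [h1, Finset.sum_insert (by simp only [Finset.mem_Icc]; omega), ih,
      Finset.sum_range_succ (fun i => g i) (M+1)]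
    push_cast
    ring

lemma sum_range_split (f : ℕ → ℚ) (M : ℕ) :
    ∑ j ∈ range (2*M+1), f j
      = ∑ i ∈ range (M+1), f (M - i) + ∑ i ∈ range M, f (M+1+i) := by
  have h : 2*M+1 = (M+1) + M := by ring
  rw [h, Finset.sum_range_add]
  congr 1
  rw [← Finset.sum_range_reflect (fun j => f (M - j)) (M+1)]
  apply Finset.sum_congr rfl
  intro i hi
  simp only [Finset.mem_range] at hi
  congr 1
  omega

lemma neg_one_pow_sub (M i : ℕ) (h : i ≤ M) : (-1:ℚ)^(M-i) = (-1)^M * (-1)^i := by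
  conv_rhs => rw [← Nat.sub_add_cancel h]
  rw [pow_add, mul_assoc, ← pow_add]
  have h2 : i + i = 2*i := by ring
  rw [h2, pow_mul, neg_one_sq, one_pow, mul_one]

lemma mul_choose_q (n j : ℕ) :
    ((j:ℚ)+1) * ((n+1).choose (j+1) : ℚ) = ((n:ℚ)+1) * (n.choose j : ℚ) := by
  have h2 : (j+1) * ((n+1).choose (j+1)) = (n+1) * (n.choose j) := by
    simpa [Nat.succ_eq_add_one, mul_comm] using (Nat.add_one_mul_choose_eq n j).symm
  exact_mod_cast h2

lemma choose_two_q (P : ℕ) : (((P+2).choose 2 : ℕ) : ℚ) = ((P:ℚ)+2)*((P:ℚ)+1)/2 := by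
  induction P with
  | zero => norm_num
  | succ P ih =>
    have h : (P+1+2) = (P+2) + 1 := by ring
    rw [h, Nat.choose_succ_succ' (P+2) 1]
    push_cast [Nat.choose_one_right, ih]
    ring

lemma neg_one_pow_sq (M : ℕ) : (-1:ℚ)^M * (-1)^M = 1 := by
  rw [← pow_add]
  have h2 : M + M = 2*M := by ring
  rw [h2, pow_mul, neg_one_sq, one_pow]


lemma mul_choose_q' (P j : ℕ) :
    ((j:ℚ)+1) * ((P+2).choose (j+1) : ℚ) = ((P:ℚ)+2) * ((P+1).choose j : ℚ) := by
  have h2 : (j+1) * ((P+2).choose (j+1)) = (P+2) * ((P+1).choose j) := by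
    have h := (Nat.add_one_mul_choose_eq (P+1) j).symm
    rw [show P+1+1 = P+2 by omega] at h
    rw [mul_comm]; exact h
  exact_mod_cast h2

lemma Bsum (P M : ℕ) :
    ∑ i ∈ range (M+1), (-1:ℚ)^i * (1+2*(i:ℚ)) *
        (((P+2).choose (M+1+i) : ℚ) * ((P+2).choose (M-i) : ℚ))
      = ((P:ℚ)+2) * (((P+1).choose M : ℚ)) := by
  have key : ∑ j ∈ range (2*M+1), (-1:ℚ)^j * ((P+2).choose j : ℚ) * ((P+1).choose (2*M - j) : ℚ)
      = (-1:ℚ)^M * ((P+1).choose M : ℚ) := by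
    rw [Gsum, fact1, H1]
  rw [sum_range_split (fun j => (-1:ℚ)^j * ((P+2).choose j : ℚ) * ((P+1).choose (2*M - j) : ℚ)) M]
    at key
  -- rewrite first piece
  have hS1 : ∑ i ∈ range (M+1),
      (fun j => (-1:ℚ)^j * ((P+2).choose j : ℚ) * ((P+1).choose (2*M - j) : ℚ)) (M - i)
      = ∑ i ∈ range (M+1), (-1:ℚ)^M * ((-1:ℚ)^i * ((P+2).choose (M-i) : ℚ) * ((P+1).choose (M+i) : ℚ)) := by
    refine Finset.sum_congr rfl fun i hi => ?_
    simp only [Finset.mem_range] at hi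
    have h1 : i ≤ M := by omega
    have h2 : 2*M - (M - i) = M + i := by omega
    simp only [h2, neg_one_pow_sub M i h1]
    ring
  have hS2 : ∑ i ∈ range M,
      (fun j => (-1:ℚ)^j * ((P+2).choose j : ℚ) * ((P+1).choose (2*M - j) : ℚ)) (M+1+i)
      = ∑ i ∈ range M, (-1:ℚ)^M * (-((-1:ℚ)^i * ((P+2).choose (M+1+i) : ℚ) * ((P+1).choose (M-1-i) : ℚ))) := by
    refine Finset.sum_congr rfl fun i hi => ?_
    simp only [Finset.mem_range] at hi
    have h2 : 2*M - (M+1+i) = M-1-i := by omega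
    have h3 : (-1:ℚ)^(M+1+i) = (-1:ℚ)^M * -((-1:ℚ)^i) := by
      rw [pow_add, pow_add]; ring
    simp only [h2, h3]
    ring
  rw [hS1, hS2, ← Finset.mul_sum, ← Finset.mul_sum, ← mul_add] at key
  -- cancel the (-1)^M
  have key2 : (∑ i ∈ range (M+1), (-1:ℚ)^i * ((P+2).choose (M-i) : ℚ) * ((P+1).choose (M+i) : ℚ))
      + ∑ i ∈ range M, -((-1:ℚ)^i * ((P+2).choose (M+1+i) : ℚ) * ((P+1).choose (M-1-i) : ℚ))
      = ((P+1).choose M : ℚ) := by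
    exact mul_left_cancel₀ (a := (-1:ℚ)^M) (by positivity) key
  rw [Finset.sum_neg_distrib] at key2
  -- now prove goal
  have hv : ∑ i ∈ range (M+1),
        (-1:ℚ)^i * ((P+2).choose (M+1+i) : ℚ) * (((M-i : ℕ):ℚ) * ((P+2).choose (M-i) : ℚ))
      = ∑ i ∈ range M, ((P:ℚ)+2) * ((-1:ℚ)^i * ((P+2).choose (M+1+i) : ℚ) * ((P+1).choose (M-1-i) : ℚ)) := by
    rw [Finset.sum_range_succ, Nat.sub_self]
    norm_num
    refine Finset.sum_congr rfl fun i hi => ?_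
    simp only [Finset.mem_range] at hi
    rw [show M - i = (M-1-i) + 1 by omega]
    have hm := mul_choose_q' P (M-1-i)
    push_cast at hm ⊢
    linear_combination ((-1:ℚ)^i * ((P+2).choose (M+1+i) : ℚ)) * hm
  have hu : ∑ i ∈ range (M+1), ((P:ℚ)+2) * ((-1:ℚ)^i * ((P+2).choose (M-i) : ℚ) * ((P+1).choose (M+i) : ℚ))
      = ∑ i ∈ range (M+1),
        (-1:ℚ)^i * (((M:ℚ)+1+i) * ((P+2).choose (M+1+i) : ℚ)) * ((P+2).choose (M-i) : ℚ) := by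
    refine Finset.sum_congr rfl fun i hi => ?_
    rw [show M + 1 + i = (M+i) + 1 by omega]
    have hm := mul_choose_q' P (M+i)
    push_cast at hm ⊢
    linear_combination (-((-1:ℚ)^i) * ((P+2).choose (M-i) : ℚ)) * hm
  have hB : ∑ i ∈ range (M+1), (-1:ℚ)^i * (1+2*(i:ℚ)) *
        (((P+2).choose (M+1+i) : ℚ) * ((P+2).choose (M-i) : ℚ))
      = ∑ i ∈ range (M+1), ((P:ℚ)+2) * ((-1:ℚ)^i * ((P+2).choose (M-i) : ℚ) * ((P+1).choose (M+i) : ℚ))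
        - ∑ i ∈ range M, ((P:ℚ)+2) * ((-1:ℚ)^i * ((P+2).choose (M+1+i) : ℚ) * ((P+1).choose (M-1-i) : ℚ)) := by
    rw [← hv, hu, ← Finset.sum_sub_distrib]
    refine Finset.sum_congr rfl fun i hi => ?_
    simp only [Finset.mem_range] at hi
    have h1 : i ≤ M := by omega
    have h2 : ((M-i : ℕ):ℚ) = (M:ℚ) - (i:ℚ) := Nat.cast_sub h1
    rw [h2]
    ring
  rw [hB, ← Finset.mul_sum, ← Finset.mul_sum]
  linear_combination ((P:ℚ)+2) * key2

lemma Asum (P M' : ℕ) :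
    ((P+2).choose (M'+1) : ℚ) * (P.choose (M'+1) : ℚ)
      + ∑ i ∈ range (M'+1), (-1:ℚ)^(i+1) *
          (((P+2).choose ((M'+1)+(i+1)) : ℚ) * (P.choose ((M'+1)-(i+1)) : ℚ)
            + ((P+2).choose ((M'+1)-(i+1)) : ℚ) * (P.choose ((M'+1)+(i+1)) : ℚ))
    = (P.choose (M'+1) : ℚ) - (P.choose M' : ℚ) := by
  set M : ℕ := M'+1 with hMdef
  have key : ∑ j ∈ range (2*M+1), (-1:ℚ)^j * ((P+2).choose j : ℚ) * (P.choose (2*M - j) : ℚ)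
      = (-1:ℚ)^M * ((P.choose M : ℚ) - (P.choose M' : ℚ)) := by
    rw [Gsum, fact2]
    exact H2 P M'
  rw [sum_range_split (fun j => (-1:ℚ)^j * ((P+2).choose j : ℚ) * (P.choose (2*M - j) : ℚ)) M]
    at key
  have hS1 : ∑ i ∈ range (M+1),
      (fun j => (-1:ℚ)^j * ((P+2).choose j : ℚ) * (P.choose (2*M - j) : ℚ)) (M - i)
      = ∑ i ∈ range (M+1), (-1:ℚ)^M * ((-1:ℚ)^i * ((P+2).choose (M-i) : ℚ) * (P.choose (M+i) : ℚ)) := by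
    refine Finset.sum_congr rfl fun i hi => ?_
    simp only [Finset.mem_range] at hi
    have h1 : i ≤ M := by omega
    have h2 : 2*M - (M - i) = M + i := by omega
    simp only [h2, neg_one_pow_sub M i h1]
    ring
  have hS2 : ∑ i ∈ range M,
      (fun j => (-1:ℚ)^j * ((P+2).choose j : ℚ) * (P.choose (2*M - j) : ℚ)) (M+1+i)
      = ∑ i ∈ range M, (-1:ℚ)^M * ((-1:ℚ)^(i+1) * ((P+2).choose (M+1+i) : ℚ) * (P.choose (M-1-i) : ℚ)) := by
    refine Finset.sum_congr rfl fun i hi => ?_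
    simp only [Finset.mem_range] at hi
    have h2 : 2*M - (M+1+i) = M-1-i := by omega
    have h3 : (-1:ℚ)^(M+1+i) = (-1:ℚ)^M * ((-1:ℚ)^(i+1)) := by
      rw [pow_add, pow_add, pow_add]; ring
    simp only [h2, h3]
    ring
  rw [hS1, hS2, ← Finset.mul_sum, ← Finset.mul_sum, ← mul_add] at key
  have key2 := mul_left_cancel₀ (a := (-1:ℚ)^M) (by positivity) key
  rw [← key2, Finset.sum_range_succ'
    (fun i => (-1:ℚ)^i * ((P+2).choose (M-i) : ℚ) * (P.choose (M+i) : ℚ)) M]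
  have hA : ∑ i ∈ range M, (-1:ℚ)^(i+1) *
        (((P+2).choose (M+(i+1)) : ℚ) * (P.choose (M-(i+1)) : ℚ)
          + ((P+2).choose (M-(i+1)) : ℚ) * (P.choose (M+(i+1)) : ℚ))
      = ∑ i ∈ range M, ((-1:ℚ)^(i+1) * ((P+2).choose (M-(i+1)) : ℚ) * (P.choose (M+(i+1)) : ℚ)
          + (-1:ℚ)^(i+1) * ((P+2).choose (M+1+i) : ℚ) * (P.choose (M-1-i) : ℚ)) := by
    refine Finset.sum_congr rfl fun i hi => ?_
    rw [show M+1+i = M+(i+1) by omega, show M-1-i = M-(i+1) by omega]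
    ring
  rw [hA, Finset.sum_add_distrib]
  simp only [pow_zero, Nat.add_zero, Nat.sub_zero, one_mul]
  ring

lemma main_nat (P M : ℕ) (hM : M ≤ P + 1) :
    -(((P+2).choose 2 : ℕ) : ℚ) * ((P+2).choose M : ℚ) * (P.choose M : ℚ)
      - (((P+2).choose 2 : ℕ) : ℚ) *
        (∑ i ∈ range M, (-1:ℚ)^(i+1) *
          (((P+2).choose (M+(i+1)) : ℚ) * (P.choose (M-(i+1)) : ℚ)
            + ((P+2).choose (M-(i+1)) : ℚ) * (P.choose (M+(i+1)) : ℚ)))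
      + ((2*((P:ℚ)+2) - 2*(M:ℚ) - 1) / 2) *
        (∑ i ∈ range (M+1), (-1:ℚ)^i * (1 + 2*(i:ℚ)) *
          (((P+2).choose (M+1+i) : ℚ) * ((P+2).choose (M-i) : ℚ)))
    = (((P:ℚ)+2)^2 / 2) * ((P+1).choose M : ℚ) := by
  rw [Bsum P M, choose_two_q P]
  rcases M with _ | M'
  · simp only [range_zero, Finset.sum_empty, mul_zero, sub_zero, Nat.choose_zero_right,
      Nat.cast_one, Nat.cast_zero]
    push_cast
    ring
  · have hA := Asum P M'
    have pascal : ((P+1).choose (M'+1) : ℚ) = (P.choose M' : ℚ) + (P.choose (M'+1) : ℚ) := by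
      exact_mod_cast congrArg (Nat.cast : ℕ → ℚ) (Nat.choose_succ_succ P M')
    have hb : ((M':ℚ)+1) * ((P+1).choose (M'+1) : ℚ) = ((P:ℚ)+1) * (P.choose M' : ℚ) :=
      mul_choose_q P M'
    push_cast
    push_cast at hA
    linear_combination (-((P:ℚ)+2)*((P:ℚ)+1)/2) * hA
      + (((P:ℚ)+2)*((P:ℚ)+1)/2) * pascal - ((P:ℚ)+2) * hb

/-- Binomial coefficient extended to integer arguments: 0 unless 0 ≤ k ≤ n. -/
def ichoose (n k : ℤ) : ℤ :=
  if 0 ≤ k ∧ k ≤ n then (n.toNat).choose k.toNat else 0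

lemma ichoose_coe (a b : ℕ) : ((ichoose (a:ℤ) (b:ℤ) : ℤ) : ℚ) = (a.choose b : ℚ) := by
  unfold ichoose
  by_cases h : (b:ℤ) ≤ (a:ℤ)
  · rw [if_pos ⟨Int.ofNat_nonneg b, h⟩]
    simp
  · rw [if_neg (by tauto)]
    have hlt : a < b := by exact_mod_cast not_le.mp h
    rw [Nat.choose_eq_zero_of_lt hlt]
    simp

theorem K_nm_identity (n m : ℤ) (hn : 2 ≤ n) (hm0 : 0 ≤ m) (hm1 : m ≤ n - 1) :
    -(ichoose n 2 : ℚ) * (ichoose n m : ℚ) * (ichoose (n - 2) m : ℚ)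
      - (ichoose n 2 : ℚ) *
        (∑ k ∈ Finset.Icc (1 : ℤ) m, (-1 : ℚ) ^ k *
          ((ichoose n (m + k) : ℚ) * (ichoose (n - 2) (m - k) : ℚ)
            + (ichoose n (m - k) : ℚ) * (ichoose (n - 2) (m + k) : ℚ)))
      + ((2 * (n : ℚ) - 2 * (m : ℚ) - 1) / 2) *
        (∑ k ∈ Finset.Icc (0 : ℤ) m, (-1 : ℚ) ^ k * (1 + 2 * (k : ℚ)) *
          ((ichoose n (m + 1 + k) : ℚ) * (ichoose n (m - k) : ℚ)))
    = ((n : ℚ) ^ 2 / 2) * (ichoose (n - 1) m : ℚ) := by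
  obtain ⟨N, rfl⟩ := Int.eq_ofNat_of_zero_le (by linarith : (0:ℤ) ≤ n)
  obtain ⟨M, rfl⟩ := Int.eq_ofNat_of_zero_le hm0
  have hN : 2 ≤ N := by exact_mod_cast hn
  have hM : M + 1 ≤ N := by omega
  obtain ⟨P, rfl⟩ : ∃ P, N = P + 2 := ⟨N-2, by omega⟩
  have hMP : M ≤ P + 1 := by omega
  have e1 : ((P+2 : ℕ):ℤ) - 2 = ((P : ℕ):ℤ) := by push_cast; ring
  have e2 : ((P+2 : ℕ):ℤ) - 1 = ((P+1 : ℕ):ℤ) := by push_cast; ring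
  have e3 : (2:ℤ) = ((2:ℕ):ℤ) := rfl
  rw [e1, e2, e3]
  rw [sum_Icc_one (fun k : ℤ => (-1 : ℚ) ^ k *
          ((ichoose ((P+2:ℕ):ℤ) ((M:ℤ) + k) : ℚ) * (ichoose ((P:ℕ):ℤ) ((M:ℤ) - k) : ℚ)
            + (ichoose ((P+2:ℕ):ℤ) ((M:ℤ) - k) : ℚ) * (ichoose ((P:ℕ):ℤ) ((M:ℤ) + k) : ℚ))) M]
  rw [sum_Icc_zero (fun k : ℤ => (-1 : ℚ) ^ k * (1 + 2 * (k : ℚ)) *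
          ((ichoose ((P+2:ℕ):ℤ) ((M:ℤ) + 1 + k) : ℚ) * (ichoose ((P+2:ℕ):ℤ) ((M:ℤ) - k) : ℚ))) M]
  have hsum1 : ∑ i ∈ range M, (fun k : ℤ => (-1 : ℚ) ^ k *
          ((ichoose ((P+2:ℕ):ℤ) ((M:ℤ) + k) : ℚ) * (ichoose ((P:ℕ):ℤ) ((M:ℤ) - k) : ℚ)
            + (ichoose ((P+2:ℕ):ℤ) ((M:ℤ) - k) : ℚ) * (ichoose ((P:ℕ):ℤ) ((M:ℤ) + k) : ℚ))) ((i:ℤ)+1)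
      = ∑ i ∈ range M, (-1:ℚ)^(i+1) *
          (((P+2).choose (M+(i+1)) : ℚ) * (P.choose (M-(i+1)) : ℚ)
            + ((P+2).choose (M-(i+1)) : ℚ) * (P.choose (M+(i+1)) : ℚ)) := by
    refine Finset.sum_congr rfl fun i hi => ?_
    simp only [Finset.mem_range] at hi
    have c1 : ((M:ℤ) + ((i:ℤ)+1)) = ((M+(i+1) : ℕ) : ℤ) := by push_cast; ring
    have c2 : ((M:ℤ) - ((i:ℤ)+1)) = ((M-(i+1) : ℕ) : ℤ) := by
      have : i + 1 ≤ M := by omega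
      push_cast [this]; ring
    have c3 : ((i:ℤ)+1) = ((i+1 : ℕ) : ℤ) := by push_cast; ring
    simp only [c1, c2]
    simp only [c3]
    simp only [ichoose_coe, zpow_natCast]
  have hsum2 : ∑ i ∈ range (M+1), (fun k : ℤ => (-1 : ℚ) ^ k * (1 + 2 * (k : ℚ)) *
          ((ichoose ((P+2:ℕ):ℤ) ((M:ℤ) + 1 + k) : ℚ) * (ichoose ((P+2:ℕ):ℤ) ((M:ℤ) - k) : ℚ))) (i:ℤ)
      = ∑ i ∈ range (M+1), (-1:ℚ)^i * (1 + 2*(i:ℚ)) *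
          (((P+2).choose (M+1+i) : ℚ) * ((P+2).choose (M-i) : ℚ)) := by
    refine Finset.sum_congr rfl fun i hi => ?_
    simp only [Finset.mem_range] at hi
    have c1 : ((M:ℤ) + 1 + (i:ℤ)) = ((M+1+i : ℕ) : ℤ) := by push_cast; ring
    have c2 : ((M:ℤ) - (i:ℤ)) = ((M-i : ℕ) : ℤ) := by
      have : i ≤ M := by omega
      push_cast [this]; ring
    simp only [c1, c2, ichoose_coe, zpow_natCast]
    norm_num
  rw [hsum1, hsum2]
  simp only [ichoose_coe]
  have := main_nat P M hMP
  push_cast at this ⊢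
  convert this using 2
end

section
/- For integers n ≥ 2, r ≥ 1, s ≥ 1, m ≥ 1 with r + 2s + m = n + 1, the following recursion holds for the coefficients d(r,s,m) := (-1)^{r+s} (1/s!) (∏_{l=0}^{s-1} C(N-2l,2)) C(r+m,m) evaluated at appropriate N: with c₁ = (-1)^{r-1+s}(1/s!)(∏_{l=0}^{s-1} C(n-2l,2)) C(r-1+m,m), c₂ = (-1)^{r+s}(1/(s-1)!)(∏_{l=0}^{s-2} C(n-2l,2)) C(r+1+m,m), c₃ = (-1)^{r+s}(1/s!)(∏_{l=0}^{s-1} C(n-2l,2)) C(r+m-1,m-1), one has -c₁ + (r+1)c₂ + c₃ = (-1)^{r+s}(1/s!)(∏_{l=0}^{s-1} C(n+1-2l,2)) C(r+m,m). -/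
lemma prod_choose2 (n : ℕ) : ∀ s : ℕ, 2 * s ≤ n →
    (∏ l ∈ Finset.range s, ((n - 2 * l).choose 2 : ℚ)) *
      (2 ^ s * ((n - 2 * s).factorial : ℚ)) = (n.factorial : ℚ)
  | 0, _ => by simp
  | (s + 1), hs => by
    have h2 : 2 ≤ n - 2 * s := by omega
    have key := Nat.choose_mul_factorial_mul_factorial h2
    have keyQ : ((n - 2 * s).choose 2 : ℚ) * (2 * ((n - 2 * s - 2).factorial : ℚ))
        = ((n - 2 * s).factorial : ℚ) := by
      have : (((n - 2 * s).choose 2 * Nat.factorial 2 * (n - 2 * s - 2).factorial : ℕ) : ℚ)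
          = ((n - 2 * s).factorial : ℚ) := by exact_mod_cast congrArg Nat.cast key
      push_cast at this ⊢
      norm_num [Nat.factorial] at this
      linarith
    have ih := prod_choose2 n s (by omega)
    rw [Finset.prod_range_succ, show n - 2 * (s + 1) = n - 2 * s - 2 from by omega]
    linear_combination ih + ((∏ l ∈ Finset.range s, ((n - 2 * l).choose 2 : ℚ)) * 2 ^ s) * keyQ

theorem coefficient_recursion (n r s m : ℕ)
    (hn : 2 ≤ n) (hr : 1 ≤ r) (hs : 1 ≤ s) (hm : 1 ≤ m)
    (h : r + 2 * s + m = n + 1) :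
    -((-1 : ℚ) ^ (r - 1 + s) * (1 / (s.factorial : ℚ)) *
        (∏ l ∈ Finset.range s, ((n - 2 * l).choose 2 : ℚ)) * ((r - 1 + m).choose m : ℚ))
      + ((r : ℚ) + 1) * ((-1 : ℚ) ^ (r + s) * (1 / ((s - 1).factorial : ℚ)) *
        (∏ l ∈ Finset.range (s - 1), ((n - 2 * l).choose 2 : ℚ)) * ((r + 1 + m).choose m : ℚ))
      + ((-1 : ℚ) ^ (r + s) * (1 / (s.factorial : ℚ)) *
        (∏ l ∈ Finset.range s, ((n - 2 * l).choose 2 : ℚ)) * ((r + m - 1).choose (m - 1) : ℚ))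
    = (-1 : ℚ) ^ (r + s) * (1 / (s.factorial : ℚ)) *
        (∏ l ∈ Finset.range s, ((n + 1 - 2 * l).choose 2 : ℚ)) * ((r + m).choose m : ℚ) := by
  obtain ⟨r', rfl⟩ : ∃ k, r = k + 1 := ⟨r - 1, by omega⟩
  obtain ⟨s', rfl⟩ : ∃ k, s = k + 1 := ⟨s - 1, by omega⟩
  obtain ⟨m', rfl⟩ : ∃ k, m = k + 1 := ⟨m - 1, by omega⟩
  have hn' : n = r' + 2 * s' + m' + 3 := by omega
  subst hn'
  -- normalize natural subtractions
  rw [show r' + 1 - 1 + (s' + 1) = r' + s' + 1 from by omega,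
      show s' + 1 - 1 = s' from by omega,
      show m' + 1 - 1 = m' from by omega,
      show r' + 1 - 1 + (m' + 1) = r' + m' + 1 from by omega,
      show r' + 1 + (m' + 1) - 1 = r' + m' + 1 from by omega,
      show r' + 1 + 1 + (m' + 1) = r' + m' + 3 from by omega,
      show r' + 1 + (m' + 1) = r' + m' + 2 from by omega]
  -- products via prod_choose2
  have hP1 := prod_choose2 (r' + 2 * s' + m' + 3) (s' + 1) (by omega)
  have hP2 := prod_choose2 (r' + 2 * s' + m' + 3) s' (by omega)
  have hP3 := prod_choose2 (r' + 2 * s' + m' + 3 + 1) (s' + 1) (by omega)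
  rw [show r' + 2 * s' + m' + 3 - 2 * (s' + 1) = r' + m' + 1 from by omega] at hP1
  rw [show r' + 2 * s' + m' + 3 - 2 * s' = r' + m' + 3 from by omega] at hP2
  rw [show r' + 2 * s' + m' + 3 + 1 - 2 * (s' + 1) = r' + m' + 2 from by omega] at hP3
  have f1 : ((r' + m' + 1).factorial : ℚ) ≠ 0 := Nat.cast_ne_zero.2 (Nat.factorial_ne_zero _)
  have f2 : ((r' + m' + 2).factorial : ℚ) ≠ 0 := Nat.cast_ne_zero.2 (Nat.factorial_ne_zero _)
  have f3 : ((r' + m' + 3).factorial : ℚ) ≠ 0 := Nat.cast_ne_zero.2 (Nat.factorial_ne_zero _)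
  have hQ1 : (∏ l ∈ Finset.range (s' + 1), (((r' + 2 * s' + m' + 3) - 2 * l).choose 2 : ℚ))
      = ((r' + 2 * s' + m' + 3).factorial : ℚ) / (2 ^ (s' + 1) * ((r' + m' + 1).factorial : ℚ)) := by
    field_simp; linarith [hP1]
  have hQ2 : (∏ l ∈ Finset.range s', (((r' + 2 * s' + m' + 3) - 2 * l).choose 2 : ℚ))
      = ((r' + 2 * s' + m' + 3).factorial : ℚ) / (2 ^ s' * ((r' + m' + 3).factorial : ℚ)) := by
    field_simp; linarith [hP2]
  have hQ3 : (∏ l ∈ Finset.range (s' + 1), (((r' + 2 * s' + m' + 3 + 1) - 2 * l).choose 2 : ℚ))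
      = ((r' + 2 * s' + m' + 3 + 1).factorial : ℚ) / (2 ^ (s' + 1) * ((r' + m' + 2).factorial : ℚ)) := by
    field_simp; linarith [hP3]
  rw [hQ1, hQ2, hQ3]
  rw [Nat.cast_choose ℚ (show m' + 1 ≤ r' + m' + 1 from by omega),
      Nat.cast_choose ℚ (show m' + 1 ≤ r' + m' + 3 from by omega),
      Nat.cast_choose ℚ (show m' ≤ r' + m' + 1 from by omega),
      Nat.cast_choose ℚ (show m' + 1 ≤ r' + m' + 2 from by omega)]
  rw [show r' + m' + 1 - (m' + 1) = r' from by omega,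
      show r' + m' + 3 - (m' + 1) = r' + 2 from by omega,
      show r' + m' + 1 - m' = r' + 1 from by omega,
      show r' + m' + 2 - (m' + 1) = r' + 1 from by omega]
  -- factorial expansion equations (in ℕ, then cast)
  have eA' : (r' + 2 * s' + m' + 3 + 1).factorial
      = (r' + 2 * s' + m' + 4) * (r' + 2 * s' + m' + 3).factorial := by
    rw [show r' + 2 * s' + m' + 3 + 1 = (r' + 2 * s' + m' + 3) + 1 from rfl, Nat.factorial_succ]
  have eB' : (r' + m' + 3).factorial
      = (r' + m' + 3) * ((r' + m' + 2) * (r' + m' + 1).factorial) := by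
    rw [show r' + m' + 3 = (r' + m' + 2) + 1 from rfl, Nat.factorial_succ,
        show r' + m' + 2 = (r' + m' + 1) + 1 from rfl, Nat.factorial_succ]
  have eC' : (r' + m' + 2).factorial = (r' + m' + 2) * (r' + m' + 1).factorial := by
    rw [show r' + m' + 2 = (r' + m' + 1) + 1 from rfl, Nat.factorial_succ]
  have eD' : (m' + 1).factorial = (m' + 1) * m'.factorial := Nat.factorial_succ m'
  have eE' : (r' + 2).factorial = (r' + 2) * ((r' + 1) * r'.factorial) := by
    rw [show r' + 2 = (r' + 1) + 1 from rfl, Nat.factorial_succ, Nat.factorial_succ]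
  have eF' : (r' + 1).factorial = (r' + 1) * r'.factorial := Nat.factorial_succ r'
  have eG' : (s' + 1).factorial = (s' + 1) * s'.factorial := Nat.factorial_succ s'
  rw [eB', eA', eC', eD', eE', eF', eG']
  have g2 : ((r' + 2 * s' + m' + 3).factorial : ℚ) ≠ 0 := Nat.cast_ne_zero.2 (Nat.factorial_ne_zero _)
  have g3 : (m'.factorial : ℚ) ≠ 0 := Nat.cast_ne_zero.2 (Nat.factorial_ne_zero _)
  have g4 : (r'.factorial : ℚ) ≠ 0 := Nat.cast_ne_zero.2 (Nat.factorial_ne_zero _)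
  have g5 : (s'.factorial : ℚ) ≠ 0 := Nat.cast_ne_zero.2 (Nat.factorial_ne_zero _)
  push_cast
  field_simp
  ring
end

section
/- For integers r, s, m ≥ 1 and n with r + 2s + m = n + 1, the rational identity C(r-1+m, m) + (r+1)s/C(r+m+1, 2) · C(r+1+m, m) + C(r+m-1, m-1) = ((r+2s+m)/(r+m)) · C(r+m, m) holds. -/
theorem binomial_rational_identity (n r s m : ℕ)
    (hr : 1 ≤ r) (hs : 1 ≤ s) (hm : 1 ≤ m) (h : r + 2 * s + m = n + 1) :
    ((r - 1 + m).choose m : ℚ)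
      + ((r : ℚ) + 1) * (s : ℚ) / ((r + m + 1).choose 2 : ℚ) * ((r + 1 + m).choose m : ℚ)
      + ((r + m - 1).choose (m - 1) : ℚ)
    = (((r : ℚ) + 2 * s + m) / ((r : ℚ) + m)) * ((r + m).choose m : ℚ) := by
  obtain ⟨a, rfl⟩ := Nat.exists_eq_add_of_le hr
  obtain ⟨b, rfl⟩ := Nat.exists_eq_add_of_le hm
  have e1 : 1 + a - 1 + (1 + b) = a + b + 1 := by omega
  have e2 : 1 + a + (1 + b) - 1 = a + b + 1 := by omega
  have e3 : 1 + b - 1 = b := by omega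
  have e4 : 1 + a + (1 + b) = a + b + 2 := by omega
  have e5 : 1 + a + 1 + (1 + b) = a + b + 3 := by omega
  have e7 : 1 + b = b + 1 := by omega
  rw [e1, e2, e3, e5, e4]
  rw [show (a + b + 2 + 1) = a + b + 3 by omega, e7]
  -- now all choose terms canonical
  have pascal : ((a + b + 1).choose (b + 1) : ℚ) + ((a + b + 1).choose b : ℚ)
      = ((a + b + 2).choose (b + 1) : ℚ) := by
    rw [show a + b + 2 = (a + b + 1) + 1 by ring, Nat.choose_succ_succ (a + b + 1) b]
    push_cast; ring
  have absorb : ((a : ℚ) + b + 3) * ((a + b + 2).choose (b + 1) : ℚ)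
      = ((a : ℚ) + 2) * ((a + b + 3).choose (b + 1) : ℚ) := by
    have key : (a + b + 2 + 1) * (a + b + 2).choose (a + 1) =
        (a + b + 3).choose (a + 2) * (a + 2) := Nat.add_one_mul_choose_eq (a + b + 2) (a + 1)
    have s1 : (a + b + 2).choose (a + 1) = (a + b + 2).choose (b + 1) := by
      have := Nat.choose_symm (show a + 1 ≤ a + b + 2 by omega)
      rw [show a + b + 2 - (a + 1) = b + 1 by omega] at this
      exact this.symm
    have s2 : (a + b + 3).choose (a + 2) = (a + b + 3).choose (b + 1) := by
      have := Nat.choose_symm (show a + 2 ≤ a + b + 3 by omega)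
      rw [show a + b + 3 - (a + 2) = b + 1 by omega] at this
      exact this.symm
    rw [s1, s2] at key
    have := congrArg (Nat.cast : ℕ → ℚ) key
    push_cast at this ⊢
    linarith
  have hc2 : (((a + b + 3).choose 2 : ℕ) : ℚ)
      = ((a : ℚ) + b + 3) * ((a : ℚ) + b + 2) / 2 := by
    rw [Nat.cast_choose_two]
    push_cast; ring
  have hne1 : ((1 : ℚ) + a + (1 + b)) ≠ 0 := by positivity
  have hne3 : ((a : ℚ) + b + 2) ≠ 0 := by positivity
  have hne4 : ((a : ℚ) + b + 3) ≠ 0 := by positivity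
  rw [hc2]
  have mid : ((1 : ℚ) + a + 1) * s / (((a : ℚ) + b + 3) * ((a : ℚ) + b + 2) / 2)
        * ((a + b + 3).choose (b + 1) : ℚ)
      = 2 * s / ((a : ℚ) + b + 2) * ((a + b + 2).choose (b + 1) : ℚ) := by
    field_simp
    linear_combination (-1 : ℚ) * absorb
  push_cast
  rw [mid]
  field_simp
  linear_combination ((1 : ℚ) + a + (1 + b)) * ((a:ℚ)+b+2) * pascal
end
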